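/- Let n ≥ 3, p ≥ 1, and let I = {i₁ < ⋯ < i_p} and J = {j₁ < ⋯ < j_p} be disjoint non-empty subsets of {1,…,n−1} with i₁ < j₁, and assume that no two elements of I are consecutive integers and no two elements of J are consecutive integers. Let Λ′ be the (n−2p)×(n−2p) submatrix of Λ_{W_n} obtained by deleting the 2p rows with indices in {i, i+1 : i ∈ I} and the 2p columns with indices in {j, j+1 : j ∈ J}. If i₁ < j₁ < i₂ < j₂ < ⋯ < i_p < j_p, then det(Λ′) = −∏_{r ∈ {1,…,n}∖(I∪J)} x_{n+r}; otherwise det(Λ′) = 0. -/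

import Mathlib

open scoped Classical

noncomputable section

/-- The variable `x_{a+1}` (i.e. the 1-based variable `x_{a+1}` is `xv n a`). -/
def xv (n : ℕ) (a : ℕ) : MvPolynomial (Fin (2 * n)) ℤ :=
  if h : a < 2 * n then MvPolynomial.X ⟨a, h⟩ else 0

/-- The graph Laplacian `Λ_{W_n}` of the wheel with `n` spokes, an `n × n` symmetric matrix
over `ℤ[x₁,…,x_{2n}]` (rows and columns `0`-indexed; variables `0`-indexed via `xv`). -/
def LW (n : ℕ) : Matrix (Fin n) (Fin n) (MvPolynomial (Fin (2 * n)) ℤ) :=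
  Matrix.of fun i j =>
    if i = j then
      (if (i : ℕ) = 0 then xv n 0 + xv n n + xv n (2 * n - 1)
       else xv n (i : ℕ) + xv n (n + (i : ℕ) - 1) + xv n (n + (i : ℕ)))
    else if (j : ℕ) = (i : ℕ) + 1 then -xv n (n + (i : ℕ))
    else if (i : ℕ) = (j : ℕ) + 1 then -xv n (n + (j : ℕ))
    else if ((i : ℕ) = 0 ∧ (j : ℕ) = n - 1) ∨ ((j : ℕ) = 0 ∧ (i : ℕ) = n - 1) then
      -xv n (2 * n - 1)
    else 0

namespace Stmt13

open Finset
/-- number of elements of `S` that are `< y` -/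
def cnt (S : Finset ℕ) (y : ℕ) : ℕ := (S.filter (fun x => x < y)).card

lemma cnt_mono (S : Finset ℕ) {y y' : ℕ} (h : y ≤ y') : cnt S y ≤ cnt S y' := by
  apply Finset.card_le_card
  intro x hx
  simp only [Finset.mem_filter] at hx ⊢
  exact ⟨hx.1, by omega⟩

lemma cnt_le_card (S : Finset ℕ) (y : ℕ) : cnt S y ≤ S.card :=
  Finset.card_le_card (Finset.filter_subset _ _)

lemma cnt_succ_of_mem {S : Finset ℕ} {y : ℕ} (h : y ∈ S) : cnt S (y+1) = cnt S y + 1 := by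
  unfold cnt
  have : S.filter (fun x => x < y + 1) = insert y (S.filter (fun x => x < y)) := by
    ext x
    simp only [Finset.mem_filter, Finset.mem_insert]
    constructor
    · rintro ⟨hx, hlt⟩
      rcases Nat.lt_succ_iff_lt_or_eq.1 hlt with h' | h'
      · exact Or.inr ⟨hx, h'⟩
      · exact Or.inl h'
    · rintro (rfl | ⟨hx, hlt⟩)
      · exact ⟨h, by omega⟩
      · exact ⟨hx, by omega⟩
  rw [this, Finset.card_insert_of_notMem (by simp)]

lemma cnt_succ_of_not_mem {S : Finset ℕ} {y : ℕ} (h : y ∉ S) : cnt S (y+1) = cnt S y := by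
  unfold cnt
  congr 1
  ext x
  simp only [Finset.mem_filter]
  constructor
  · rintro ⟨hx, hlt⟩
    refine ⟨hx, ?_⟩
    rcases Nat.lt_succ_iff_lt_or_eq.1 hlt with h' | rfl
    · exact h'
    · exact absurd hx h
  · rintro ⟨hx, hlt⟩; exact ⟨hx, by omega⟩

section Enum

variable {m : ℕ} {f : Fin m → ℕ} {S : Finset ℕ}

lemma card_filter_val_lt_le (c : ℕ) :
    ((Finset.univ : Finset (Fin m)).filter (fun k : Fin m => (k : ℕ) < c)).card ≤ c := by
  classical
  have h := Finset.card_le_card_of_injOn (s := (Finset.univ : Finset (Fin m)).filter (fun k : Fin m => (k : ℕ) < c)) (t := Finset.range c) (fun k : Fin m => (k : ℕ))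
    (by intro k hk
        rw [Finset.mem_coe, Finset.mem_filter] at hk
        exact Finset.mem_range.2 hk.2)
    (by intro a _ b _ h; exact Fin.ext h)
  exact h.trans_eq (Finset.card_range c)

lemma card_filter_val_lt (c : ℕ) (hc : c ≤ m) :
    ((Finset.univ : Finset (Fin m)).filter (fun k : Fin m => (k : ℕ) < c)).card = c := by
  classical
  have h := Finset.card_nbij (s := (Finset.univ : Finset (Fin m)).filter (fun k : Fin m => (k : ℕ) < c)) (t := Finset.range c) (fun k : Fin m => (k : ℕ))
    (by intro k hk
        rw [Finset.mem_coe, Finset.mem_filter] at hk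
        exact Finset.mem_range.2 hk.2)
    (by intro a _ b _ h; exact Fin.ext h)
    (by intro x hx
        simp only [Finset.coe_range, Set.mem_Iio] at hx
        refine ⟨⟨x, lt_of_lt_of_le hx hc⟩, ?_, rfl⟩
        simp only [Finset.coe_filter, Set.mem_setOf_eq, Finset.mem_univ, true_and]
        exact hx)
  exact h.trans (Finset.card_range c)

variable (hf : StrictMono f) (hS : ∀ x, x ∈ S ↔ ∃ k, f k = x)

include hf hS

lemma enum_mem (k : Fin m) : f k ∈ S := (hS _).2 ⟨k, rfl⟩

lemma enum_card : S.card = m := by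
  classical
  have : S = Finset.univ.image f := by
    ext x
    simp only [Finset.mem_image, Finset.mem_univ, true_and]
    exact (hS x).trans (by tauto)
  rw [this, Finset.card_image_of_injective _ hf.injective, Finset.card_univ, Fintype.card_fin]

lemma cnt_le_m (y : ℕ) : cnt S y ≤ m := (cnt_le_card S y).trans (enum_card hf hS).le

lemma enum_lt_iff (k : Fin m) (y : ℕ) : f k < y ↔ (k : ℕ) < cnt S y := by
  classical
  constructor
  · intro h
    have hsub : ∀ t : Fin ((k : ℕ) + 1), f ⟨(t : ℕ), by omega⟩ ∈ S.filter (fun x => x < y) := by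
      intro t
      refine Finset.mem_filter.2 ⟨enum_mem hf hS _, ?_⟩
      have : f ⟨(t : ℕ), by omega⟩ ≤ f k := hf.monotone (by simp [Fin.le_def]; omega)
      omega
    have hinj : Set.InjOn (fun t : Fin ((k : ℕ) + 1) => f ⟨(t : ℕ), by omega⟩)
        (Finset.univ : Finset (Fin ((k : ℕ)+1))) := by
      intro a _ b _ hab
      have := hf.injective hab
      simpa [Fin.ext_iff] using this
    have := Finset.card_le_card_of_injOn _ (fun a _ => hsub a) hinj
    simpa [cnt] using this
  · intro h
    by_contra hc
    push_neg at hc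
    have hsub : S.filter (fun x => x < y) ⊆
        (Finset.univ.filter (fun k' : Fin m => (k' : ℕ) < (k : ℕ))).image f := by
      intro x hx
      obtain ⟨hxS, hxy⟩ := Finset.mem_filter.1 hx
      obtain ⟨k', rfl⟩ := (hS x).1 hxS
      refine Finset.mem_image.2 ⟨k', ?_, rfl⟩
      simp only [Finset.mem_filter, Finset.mem_univ, true_and]
      have : f k' < f k := lt_of_lt_of_le hxy hc
      exact hf.lt_iff_lt.1 this
    have h1 := Finset.card_le_card hsub
    have h2 : ((Finset.univ.filter (fun k' : Fin m => (k' : ℕ) < (k : ℕ))).image f).card ≤ (k:ℕ) := by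
      refine le_trans (Finset.card_image_le) (card_filter_val_lt_le _)
    have : cnt S y ≤ (k : ℕ) := le_trans h1 h2
    omega

lemma enum_of_lt_cnt {v y : ℕ} (hc : v < cnt S y) (hv : v < m) : f ⟨v, hv⟩ < y :=
  (enum_lt_iff hf hS ⟨v, hv⟩ y).2 hc

lemma cnt_enum_succ (k : Fin m) : cnt S (f k + 1) = (k : ℕ) + 1 := by
  have h1 : (k : ℕ) < cnt S (f k + 1) := (enum_lt_iff hf hS k _).1 (by omega)
  have h2 : cnt S (f k + 1) ≤ (k : ℕ) + 1 := by
    by_contra hc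
    push_neg at hc
    have hk1 : (k : ℕ) + 1 < m := by
      have := cnt_le_m hf hS (f k + 1); omega
    have := enum_of_lt_cnt hf hS (show (k:ℕ)+1 < cnt S (f k + 1) by omega) hk1
    have : f ⟨(k : ℕ) + 1, hk1⟩ ≤ f k := by omega
    have h3 : f k < f ⟨(k : ℕ) + 1, hk1⟩ := hf (by simp [Fin.lt_def])
    omega
  omega

lemma card_filter_enum_lt (y : ℕ) :
    (Finset.univ.filter (fun k : Fin m => f k < y)).card = cnt S y := by
  classical
  have : Finset.univ.filter (fun k : Fin m => f k < y)
      = Finset.univ.filter (fun k : Fin m => (k : ℕ) < cnt S y) := by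
    ext k; simp [enum_lt_iff hf hS k y]
  rw [this, card_filter_val_lt _ (cnt_le_m hf hS y)]

lemma card_filter_window {a b : ℕ} (hab : a ≤ b) :
    (Finset.univ.filter (fun k : Fin m => a ≤ f k ∧ f k < b)).card + cnt S a = cnt S b := by
  classical
  rw [← card_filter_enum_lt hf hS a, ← card_filter_enum_lt hf hS b]
  rw [← Finset.card_union_of_disjoint]
  · congr 1
    ext k
    simp only [Finset.mem_union, Finset.mem_filter, Finset.mem_univ, true_and]
    omega
  · rw [Finset.disjoint_filter]
    intro k _ h
    omega

end Enum

/-! ### Adjacency structure of `LW` -/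

def Adj (n r c : ℕ) : Prop :=
  c = r + 1 ∨ r = c + 1 ∨ r = c ∨ (r = 0 ∧ c = n - 1) ∨ (r = n - 1 ∧ c = 0)

lemma LW_eq_zero_of_not_adj {n : ℕ} (i j : Fin n) (h : ¬ Adj n (i : ℕ) (j : ℕ)) :
    LW n i j = 0 := by
  unfold LW
  simp only [Matrix.of_apply]
  have g1 : ¬ i = j := fun he => h (Or.inr (Or.inr (Or.inl (by rw [he]))))
  have g2 : ¬ (j : ℕ) = (i : ℕ) + 1 := fun he => h (Or.inl he)
  have g3 : ¬ (i : ℕ) = (j : ℕ) + 1 := fun he => h (Or.inr (Or.inl he))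
  have g4 : ¬ (((i : ℕ) = 0 ∧ (j : ℕ) = n - 1) ∨ ((j : ℕ) = 0 ∧ (i : ℕ) = n - 1)) := by
    rintro (⟨ha, hb⟩ | ⟨ha, hb⟩)
    · exact h (Or.inr (Or.inr (Or.inr (Or.inl ⟨ha, hb⟩))))
    · exact h (Or.inr (Or.inr (Or.inr (Or.inr ⟨hb, ha⟩))))
  rw [if_neg g1, if_neg g2, if_neg g3, if_neg g4]

lemma LW_right {n : ℕ} (i j : Fin n) (h : (j : ℕ) = (i : ℕ) + 1) :
    LW n i j = -xv n (n + (i : ℕ)) := by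
  unfold LW
  simp only [Matrix.of_apply]
  have hne : ¬ i = j := by
    intro he; rw [he] at h; omega
  rw [if_neg hne, if_pos h]

lemma LW_left {n : ℕ} (i j : Fin n) (h : (i : ℕ) = (j : ℕ) + 1) :
    LW n i j = -xv n (n + (j : ℕ)) := by
  unfold LW
  simp only [Matrix.of_apply]
  have hne : ¬ i = j := by
    intro he; rw [he] at h; omega
  have hne2 : ¬ (j : ℕ) = (i : ℕ) + 1 := by omega
  rw [if_neg hne, if_neg hne2, if_pos h]

lemma LW_corner {n : ℕ} (hn : 3 ≤ n) (i j : Fin n) (hi : (i : ℕ) = n - 1) (hj : (j : ℕ) = 0) :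
    LW n i j = -xv n (2 * n - 1) := by
  unfold LW
  simp only [Matrix.of_apply]
  have hne : ¬ i = j := by
    intro he; rw [he, hj] at hi; omega
  have hne2 : ¬ (j : ℕ) = (i : ℕ) + 1 := by omega
  have hne3 : ¬ (i : ℕ) = (j : ℕ) + 1 := by omega
  rw [if_neg hne, if_neg hne2, if_neg hne3, if_pos (Or.inr ⟨hj, hi⟩)]

/-- splitting `range y` by a "no two consecutive" set `K` of positive naturals -/
lemma cnt_split {K : Finset ℕ} (hK1 : ∀ x ∈ K, 1 ≤ x) (hcons : ∀ x ∈ K, x + 1 ∉ K) (y : ℕ) :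
    ((Finset.range y).filter (fun r => r + 1 ∉ K ∧ r ∉ K)).card + cnt K (y + 1) + cnt K y = y := by
  classical
  have h2 : cnt K (y + 1) = ((Finset.range y).filter (fun r => r + 1 ∈ K)).card := by
    unfold cnt
    refine Finset.card_nbij' (fun i => i - 1) (fun r => r + 1) ?_ ?_ ?_ ?_
    · intro i hi
      simp only [Finset.mem_coe, Finset.mem_filter, Finset.mem_range] at hi ⊢
      have hb := hK1 _ hi.1
      have he : i - 1 + 1 = i := by omega
      exact ⟨by omega, by rw [he]; exact hi.1⟩
    · intro r hr
      simp only [Finset.mem_coe, Finset.mem_filter, Finset.mem_range] at hr ⊢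
      exact ⟨hr.2, by omega⟩
    · intro i hi
      simp only [Finset.mem_coe, Finset.mem_filter] at hi
      have hb := hK1 _ hi.1
      show i - 1 + 1 = i
      omega
    · intro r _
      show r + 1 - 1 = r
      omega
  have h3 : cnt K y = ((Finset.range y).filter (fun r => r ∈ K)).card := by
    unfold cnt
    congr 1
    ext r
    simp only [Finset.mem_filter, Finset.mem_range]
    tauto
  rw [h2, h3]
  have hd1 : Disjoint ((Finset.range y).filter (fun r => r + 1 ∈ K))
      ((Finset.range y).filter (fun r => r ∈ K)) := by
    rw [Finset.disjoint_filter]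
    intro r _ h1' h2'
    exact absurd h1' (hcons r h2')
  have hd0 : Disjoint ((Finset.range y).filter (fun r => r + 1 ∉ K ∧ r ∉ K))
      (((Finset.range y).filter (fun r => r + 1 ∈ K)) ∪
        ((Finset.range y).filter (fun r => r ∈ K))) := by
    rw [Finset.disjoint_union_right]
    constructor <;> (rw [Finset.disjoint_filter]; intro r hr h1'; tauto)
  have hunion : ((Finset.range y).filter (fun r => r + 1 ∉ K ∧ r ∉ K)) ∪
      (((Finset.range y).filter (fun r => r + 1 ∈ K)) ∪
        ((Finset.range y).filter (fun r => r ∈ K))) = Finset.range y := by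
    ext r
    simp only [Finset.mem_union, Finset.mem_filter, Finset.mem_range]
    tauto
  have hc := congrArg Finset.card hunion
  rw [Finset.card_union_of_disjoint hd0, Finset.card_union_of_disjoint hd1,
    Finset.card_range] at hc
  omega

/-! ### Context -/

structure Ctx (n p m : ℕ) : Type where
  (I J : Finset ℕ)
  (iE jE : Fin p → ℕ)
  (Rk Ck : Fin m → Fin n)
  (hn : 3 ≤ n)
  (hp : 1 ≤ p)
  (hm : m = n - 2 * p)
  (hIsub : I ⊆ Finset.Icc 1 (n - 1))
  (hJsub : J ⊆ Finset.Icc 1 (n - 1))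
  (hIJ : Disjoint I J)
  (hIcard : I.card = p)
  (hJcard : J.card = p)
  (hIcons : ∀ x ∈ I, x + 1 ∉ I)
  (hJcons : ∀ y ∈ J, y + 1 ∉ J)
  (hiE : StrictMono iE)
  (hiEr : ∀ x, x ∈ I ↔ ∃ t, iE t = x)
  (hjE : StrictMono jE)
  (hjEr : ∀ x, x ∈ J ↔ ∃ t, jE t = x)
  (hij : iE ⟨0, hp⟩ < jE ⟨0, hp⟩)
  (hRk : StrictMono Rk)
  (hRkr : ∀ r : Fin n, (∃ k, Rk k = r) ↔ ((r : ℕ) + 1 ∉ I ∧ (r : ℕ) ∉ I))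
  (hCk : StrictMono Ck)
  (hCkr : ∀ r : Fin n, (∃ k, Ck k = r) ↔ ((r : ℕ) + 1 ∉ J ∧ (r : ℕ) ∉ J))

namespace Ctx

variable {n p m : ℕ} (c : Ctx n p m)

def Interleaved : Prop :=
  (∀ a, c.iE a < c.jE a) ∧ ∀ a b : Fin p, (a : ℕ) + 1 = (b : ℕ) → c.jE a < c.iE b

/-- kept rows, as a finset of positions -/
def SR : Finset ℕ := (Finset.range n).filter (fun r => (r + 1 ∉ c.I) ∧ (r ∉ c.I))

def SC : Finset ℕ := (Finset.range n).filter (fun r => (r + 1 ∉ c.J) ∧ (r ∉ c.J))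

def fR : Fin m → ℕ := fun k => (c.Rk k : ℕ)

def fC : Fin m → ℕ := fun k => (c.Ck k : ℕ)

lemma hfR : StrictMono c.fR := fun _ _ h => c.hRk h

lemma hfC : StrictMono c.fC := fun _ _ h => c.hCk h

lemma hSR : ∀ x, x ∈ c.SR ↔ ∃ k, c.fR k = x := by
  intro x
  unfold SR fR
  simp only [Finset.mem_filter, Finset.mem_range]
  constructor
  · rintro ⟨hx, h1, h2⟩
    obtain ⟨k, hk⟩ := (c.hRkr ⟨x, hx⟩).2 ⟨h1, h2⟩
    exact ⟨k, by rw [hk]⟩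
  · rintro ⟨k, rfl⟩
    have := (c.hRkr (c.Rk k)).1 ⟨k, rfl⟩
    exact ⟨(c.Rk k).isLt, this.1, this.2⟩

lemma hSC : ∀ x, x ∈ c.SC ↔ ∃ k, c.fC k = x := by
  intro x
  unfold SC fC
  simp only [Finset.mem_filter, Finset.mem_range]
  constructor
  · rintro ⟨hx, h1, h2⟩
    obtain ⟨k, hk⟩ := (c.hCkr ⟨x, hx⟩).2 ⟨h1, h2⟩
    exact ⟨k, by rw [hk]⟩
  · rintro ⟨k, rfl⟩
    have := (c.hCkr (c.Ck k)).1 ⟨k, rfl⟩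
    exact ⟨(c.Ck k).isLt, this.1, this.2⟩

lemma I_mem_bounds {x : ℕ} (hx : x ∈ c.I) : 1 ≤ x ∧ x ≤ n - 1 := by
  have := c.hIsub hx; simpa [Finset.mem_Icc] using this

lemma J_mem_bounds {x : ℕ} (hx : x ∈ c.J) : 1 ≤ x ∧ x ≤ n - 1 := by
  have := c.hJsub hx; simpa [Finset.mem_Icc] using this

lemma iE_mem (t : Fin p) : c.iE t ∈ c.I := (c.hiEr _).2 ⟨t, rfl⟩

lemma jE_mem (t : Fin p) : c.jE t ∈ c.J := (c.hjEr _).2 ⟨t, rfl⟩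

lemma I_not_mem_J {x : ℕ} (hx : x ∈ c.I) : x ∉ c.J :=
  Finset.disjoint_left.1 c.hIJ hx

include c in
lemma two_p_lt_n : 2 * p + 1 ≤ n := by
  have hsub : c.I ∪ c.J ⊆ Finset.Icc 1 (n - 1) := Finset.union_subset c.hIsub c.hJsub
  have hcard := Finset.card_le_card hsub
  rw [Finset.card_union_of_disjoint c.hIJ, c.hIcard, c.hJcard, Nat.card_Icc] at hcard
  have := c.hn
  omega

include c in
lemma hm1 : 1 ≤ m := by
  have h1 := c.two_p_lt_n
  have h2 := c.hm
  omega

/-- the fundamental counting identity for kept rows -/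
lemma cntSR {y : ℕ} (hy : y ≤ n) :
    cnt c.SR y + cnt c.I (y + 1) + cnt c.I y = y := by
  classical
  have h1 : cnt c.SR y = ((Finset.range y).filter (fun r => r + 1 ∉ c.I ∧ r ∉ c.I)).card := by
    unfold cnt SR
    congr 1
    ext r
    simp only [Finset.mem_filter, Finset.mem_range]
    constructor
    · rintro ⟨⟨hr, h2, h3⟩, h4⟩; exact ⟨h4, h2, h3⟩
    · rintro ⟨h4, h2, h3⟩; exact ⟨⟨by omega, h2, h3⟩, h4⟩
  rw [h1]
  exact cnt_split (fun x hx => (c.I_mem_bounds hx).1) c.hIcons y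

lemma cntSC {y : ℕ} (hy : y ≤ n) :
    cnt c.SC y + cnt c.J (y + 1) + cnt c.J y = y := by
  classical
  have h1 : cnt c.SC y = ((Finset.range y).filter (fun r => r + 1 ∉ c.J ∧ r ∉ c.J)).card := by
    unfold cnt SC
    congr 1
    ext r
    simp only [Finset.mem_filter, Finset.mem_range]
    constructor
    · rintro ⟨⟨hr, h2, h3⟩, h4⟩; exact ⟨h4, h2, h3⟩
    · rintro ⟨h4, h2, h3⟩; exact ⟨⟨by omega, h2, h3⟩, h4⟩
  rw [h1]
  exact cnt_split (fun x hx => (c.J_mem_bounds hx).1) c.hJcons y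

lemma fR_kept (k : Fin m) : c.fR k + 1 ∉ c.I ∧ c.fR k ∉ c.I := by
  have h := (c.hSR (c.fR k)).2 ⟨k, rfl⟩
  unfold SR at h
  simpa using (Finset.mem_filter.1 h).2

lemma fC_kept (k : Fin m) : c.fC k + 1 ∉ c.J ∧ c.fC k ∉ c.J := by
  have h := (c.hSC (c.fC k)).2 ⟨k, rfl⟩
  unfold SC at h
  simpa using (Finset.mem_filter.1 h).2

lemma fR_lt_n (k : Fin m) : c.fR k < n := (c.Rk k).isLt

lemma fC_lt_n (k : Fin m) : c.fC k < n := (c.Ck k).isLt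

section Interleaved

variable (hil : c.Interleaved)
include hil

lemma F1 (y : ℕ) : cnt c.J y ≤ cnt c.I y := by
  rw [← card_filter_enum_lt c.hjE c.hjEr y, ← card_filter_enum_lt c.hiE c.hiEr y]
  apply Finset.card_le_card
  intro t ht
  simp only [Finset.mem_filter, Finset.mem_univ, true_and] at ht ⊢
  exact lt_trans (hil.1 t) ht

lemma F2 (y : ℕ) : cnt c.I y ≤ cnt c.J y + 1 := by
  set s := cnt c.I y with hs
  rcases Nat.lt_or_ge s 2 with h | h
  · omega
  · have hsp : s ≤ p := cnt_le_m c.hiE c.hiEr y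
    have h1 : c.iE ⟨s - 1, by omega⟩ < y :=
      enum_of_lt_cnt c.hiE c.hiEr (by omega) (by omega)
    have h2 : c.jE ⟨s - 2, by omega⟩ < c.iE ⟨s - 1, by omega⟩ := by
      apply hil.2
      simp only []
      omega
    have h3 : (s - 2 : ℕ) < cnt c.J y :=
      (enum_lt_iff c.hjE c.hjEr ⟨s - 2, by omega⟩ y).1 (by omega)
    omega

lemma F3 (y : ℕ) : cnt c.J (y + 1) ≤ cnt c.I y := by
  by_cases hy : y ∈ c.J
  · obtain ⟨t, ht⟩ := (c.hjEr y).1 hy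
    have h1 : cnt c.J (y + 1) = (t : ℕ) + 1 := by
      rw [← ht]; exact cnt_enum_succ c.hjE c.hjEr t
    have h2 : ((t : ℕ)) < cnt c.I y :=
      (enum_lt_iff c.hiE c.hiEr t y).1 (by have := hil.1 t; omega)
    omega
  · rw [cnt_succ_of_not_mem hy]
    exact c.F1 hil y

lemma F4 (y : ℕ) : cnt c.I (y + 1) ≤ cnt c.J y + 1 := by
  by_cases hy : y ∈ c.I
  · obtain ⟨t, ht⟩ := (c.hiEr y).1 hy
    have h1 : cnt c.I (y + 1) = (t : ℕ) + 1 := by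
      rw [← ht]; exact cnt_enum_succ c.hiE c.hiEr t
    rcases Nat.eq_zero_or_pos (t : ℕ) with h0 | h0
    · omega
    · have h2 : c.jE ⟨(t : ℕ) - 1, by omega⟩ < c.iE t := by
        apply hil.2
        simp only []
        omega
      have h3 : ((t : ℕ) - 1) < cnt c.J y :=
        (enum_lt_iff c.hjE c.hjEr ⟨(t : ℕ) - 1, by omega⟩ y).1 (by omega)
      omega
  · rw [cnt_succ_of_not_mem hy]
    exact c.F2 hil y

lemma jE0_ge_2 : 2 ≤ c.jE ⟨0, c.hp⟩ := by
  have h1 := c.hij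
  have h2 := (c.I_mem_bounds (c.iE_mem ⟨0, c.hp⟩)).1
  omega

lemma Rk_last : c.fR ⟨m - 1, by have := c.hm1; omega⟩ = n - 1 := by
  have hn := c.hn
  have hkeep : (n - 1) ∈ c.SR := by
    unfold SR
    simp only [Finset.mem_filter, Finset.mem_range]
    refine ⟨by omega, ?_, ?_⟩
    · intro hmem
      have := (c.I_mem_bounds hmem).2
      omega
    · intro hmem
      obtain ⟨t, ht⟩ := (c.hiEr _).1 hmem
      have h1 := hil.1 t
      have h2 := (c.J_mem_bounds (c.jE_mem t)).2
      omega
  obtain ⟨k, hk⟩ := (c.hSR _).1 hkeep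
  have hkm : (k : ℕ) = m - 1 := by
    by_contra hne
    have hlt : k < (⟨m - 1, by have := c.hm1; omega⟩ : Fin m) := by
      rw [Fin.lt_def]
      have := k.isLt
      simp only []
      omega
    have := c.hfR hlt
    have h2 := c.fR_lt_n ⟨m - 1, by have := c.hm1; omega⟩
    omega
  have : k = (⟨m - 1, by have := c.hm1; omega⟩ : Fin m) := Fin.ext hkm
  rw [← this, hk]

lemma Ck_zero : c.fC ⟨0, c.hm1⟩ = 0 := by
  have hj2 := c.jE0_ge_2 hil
  have hkeep : (0 : ℕ) ∈ c.SC := by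
    unfold SC
    simp only [Finset.mem_filter, Finset.mem_range]
    refine ⟨by have := c.hn; omega, ?_, ?_⟩
    · intro hmem
      obtain ⟨t, ht⟩ := (c.hjEr _).1 hmem
      have : c.jE ⟨0, c.hp⟩ ≤ c.jE t := c.hjE.monotone (by simp [Fin.le_def])
      omega
    · intro hmem
      have := (c.J_mem_bounds hmem).1
      omega
  obtain ⟨k, hk⟩ := (c.hSC _).1 hkeep
  have : c.fC ⟨0, c.hm1⟩ ≤ c.fC k := c.hfC.monotone (by simp [Fin.le_def])
  omega

/-- The key step lemma: the `(k+1)`-st kept column is adjacent to (and distinct from)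
the `k`-th kept row. -/
lemma step (k : Fin m) (hk : (k : ℕ) + 1 < m) :
    c.fC ⟨(k : ℕ) + 1, hk⟩ = c.fR k + 1 ∨ c.fC ⟨(k : ℕ) + 1, hk⟩ + 1 = c.fR k := by
  have hn := c.hn
  set r := c.fR k with hr
  set c1 := c.fC ⟨(k : ℕ) + 1, hk⟩ with hc1
  have hrn : r + 2 ≤ n := by
    have hlt : k < (⟨m - 1, by omega⟩ : Fin m) := by
      rw [Fin.lt_def]; simp only []; omega
    have := c.hfR hlt
    have h2 := c.Rk_last hil
    omega
  have hkept := c.fR_kept k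
  have hcI2 : cnt c.I (r + 2) = cnt c.I (r + 1) := cnt_succ_of_not_mem hkept.1
  have hcI1 : cnt c.I (r + 1) = cnt c.I r := cnt_succ_of_not_mem hkept.2
  have hSRr : cnt c.SR (r + 1) = (k : ℕ) + 1 := cnt_enum_succ c.hfR c.hSR k
  have hSRe := c.cntSR (show r + 1 ≤ n by omega)
  -- (a) upper bound : c1 < r + 2
  have ha : c1 < r + 2 := by
    rw [hc1]
    rw [enum_lt_iff c.hfC c.hSC]
    have hSCe := c.cntSC (show r + 2 ≤ n by omega)
    have hf3a := c.F3 hil (r + 2)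
    have hf3b := c.F3 hil (r + 1)
    have hb1 : cnt c.I (r + 1 + 1) = cnt c.I (r + 2) := rfl
    have hb2 : cnt c.J (r + 1 + 1) = cnt c.J (r + 2) := rfl
    simp only []
    omega
  -- (b) lower bound : r ≤ c1 + 1
  have hb : r ≤ c1 + 1 := by
    by_contra hcon
    push_neg at hcon
    have hc1lt : c1 < r - 1 := by omega
    have hlt : ((k : ℕ) + 1) < cnt c.SC (r - 1) := by
      have := (enum_lt_iff c.hfC c.hSC ⟨(k : ℕ) + 1, hk⟩ (r - 1)).1 (by omega)
      simpa using this
    have hSCe := c.cntSC (show r - 1 ≤ n by omega)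
    have hf4 := c.F4 hil (r - 1)
    have hf2 := c.F2 hil r
    have hrw : r - 1 + 1 = r := by omega
    rw [hrw] at hf4 hSCe
    have hb1 : cnt c.I (r + 1 + 1) = cnt c.I (r + 2) := rfl
    omega
  -- (c) c1 ≠ r
  have hc : c1 ≠ r := by
    intro heq
    have hSCr : cnt c.SC (c1 + 1) = (k : ℕ) + 2 := by
      have := cnt_enum_succ c.hfC c.hSC ⟨(k : ℕ) + 1, hk⟩
      simpa using this
    rw [heq] at hSCr
    have hSCe := c.cntSC (show r + 1 ≤ n by omega)
    have hkeptC := c.fC_kept ⟨(k : ℕ) + 1, hk⟩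
    rw [← hc1, heq] at hkeptC
    have hcJ2 : cnt c.J (r + 2) = cnt c.J (r + 1) := cnt_succ_of_not_mem hkeptC.1
    have hcJ1 : cnt c.J (r + 1) = cnt c.J r := cnt_succ_of_not_mem hkeptC.2
    have hSCe2 := c.cntSC (show r + 2 ≤ n by omega)
    have hb1 : cnt c.I (r + 1 + 1) = cnt c.I (r + 2) := rfl
    have hb2 : cnt c.J (r + 1 + 1) = cnt c.J (r + 2) := rfl
    omega
  omega

/-- counting facts near `j₁` -/
lemma cnt_j1_facts :
    cnt c.SC (c.jE ⟨0, c.hp⟩ - 1) = c.jE ⟨0, c.hp⟩ - 1 ∧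
    cnt c.SR (c.jE ⟨0, c.hp⟩) + 2 = c.jE ⟨0, c.hp⟩ := by
  set j1 := c.jE ⟨0, c.hp⟩ with hj1
  have hj2 : 2 ≤ j1 := c.jE0_ge_2 hil
  have hj1n : j1 ≤ n - 1 := (c.J_mem_bounds (c.jE_mem _)).2
  have hn := c.hn
  have hcJ0 : cnt c.J j1 = 0 := by
    by_contra hc
    have h0 : 0 < cnt c.J j1 := Nat.pos_of_ne_zero hc
    have := enum_of_lt_cnt c.hjE c.hjEr h0 c.hp
    have h1 : c.jE ⟨0, c.hp⟩ ≤ c.jE ⟨0, c.hp⟩ := le_refl _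
    omega
  have hcJ0' : cnt c.J (j1 - 1) = 0 := by
    have := cnt_mono c.J (show j1 - 1 ≤ j1 by omega)
    omega
  have hcI1 : cnt c.I j1 = 1 := by
    have hge : 0 < cnt c.I j1 :=
      (enum_lt_iff c.hiE c.hiEr ⟨0, c.hp⟩ j1).1 c.hij
    have hle : cnt c.I j1 ≤ 1 := by
      by_contra hc
      push_neg at hc
      have hp2 : 1 < p := by
        have := cnt_le_m c.hiE c.hiEr j1
        omega
      have h1 := enum_of_lt_cnt c.hiE c.hiEr (show 1 < cnt c.I j1 by omega) hp2
      have h2 : c.jE ⟨0, c.hp⟩ < c.iE ⟨1, hp2⟩ := hil.2 _ _ (by simp)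
      omega
    omega
  have hcI1' : cnt c.I (j1 + 1) = 1 := by
    have hge : cnt c.I j1 ≤ cnt c.I (j1 + 1) := cnt_mono c.I (by omega)
    have hle : cnt c.I (j1 + 1) ≤ 1 := by
      by_contra hc
      push_neg at hc
      have hp2 : 1 < p := by
        have := cnt_le_m c.hiE c.hiEr (j1 + 1)
        omega
      have h1 := enum_of_lt_cnt c.hiE c.hiEr (show 1 < cnt c.I (j1 + 1) by omega) hp2
      have h2 : c.jE ⟨0, c.hp⟩ < c.iE ⟨1, hp2⟩ := hil.2 _ _ (by simp)
      omega
    omega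
  constructor
  · have h := c.cntSC (show j1 - 1 ≤ n by omega)
    have hrw : j1 - 1 + 1 = j1 := by omega
    rw [hrw] at h
    omega
  · have h := c.cntSR (show j1 ≤ n by omega)
    omega

/-- Any adjacency-respecting permutation sends the last row to column `0`. -/
lemma tau_last (τ : Equiv.Perm (Fin m)) (hadj : ∀ k, Adj n (c.fR k) (c.fC (τ k))) :
    τ ⟨m - 1, by have := c.hm1; omega⟩ = ⟨0, c.hm1⟩ := by
  classical
  set j1 := c.jE ⟨0, c.hp⟩ with hj1
  have hj2 : 2 ≤ j1 := c.jE0_ge_2 hil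
  have hj1n : j1 ≤ n - 1 := (c.J_mem_bounds (c.jE_mem _)).2
  have hn := c.hn
  obtain ⟨hSCj, hSRj⟩ := c.cnt_j1_facts hil
  have hm1 := c.hm1
  have hRlast := c.Rk_last hil
  have hCzero := c.Ck_zero hil
  by_contra hne
  set T := Finset.univ.filter (fun j : Fin m => c.fC j < j1 - 1) with hT
  set A := Finset.univ.filter (fun k : Fin m => c.fR k < j1) with hA
  have hTcard : T.card = j1 - 1 := by
    rw [hT, card_filter_enum_lt c.hfC c.hSC]
    exact hSCj
  have hAcard : A.card + 2 = j1 := by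
    rw [hA, card_filter_enum_lt c.hfR c.hSR]
    exact hSRj
  have hsub : ∀ j ∈ T, τ.symm j ∈ A := by
    intro j hj
    rw [hT, Finset.mem_filter] at hj
    have hcj : c.fC j < j1 - 1 := hj.2
    have hadj' := hadj (τ.symm j)
    rw [Equiv.apply_symm_apply] at hadj'
    rw [hA, Finset.mem_filter]
    refine ⟨Finset.mem_univ _, ?_⟩
    rcases hadj' with h | h | h | ⟨h1, h2⟩ | ⟨h1, h2⟩
    · omega
    · omega
    · omega
    · omega
    · -- fR (τ.symm j) = n - 1 : so τ.symm j is the last row; then fC j = 0, so j = 0,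
      -- contradicting hne
      exfalso
      have hklast : τ.symm j = ⟨m - 1, by omega⟩ := by
        apply c.hfR.injective
        rw [h1, hRlast]
      have hj0 : j = ⟨0, c.hm1⟩ := by
        apply c.hfC.injective
        rw [h2, hCzero]
      apply hne
      rw [← hj0, ← hklast, Equiv.apply_symm_apply]
  have hcard := Finset.card_le_card_of_injOn (fun j => τ.symm j) hsub
    (by intro a _ b _ h; exact τ.symm.injective h)
  omega

/-- Uniqueness: adjacency forces the rotation. -/
lemma tau_forced (τ : Equiv.Perm (Fin m)) (hadj : ∀ k, Adj n (c.fR k) (c.fC (τ k)))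
    (v : ℕ) (hv : v + 1 < m) : (τ ⟨v, by omega⟩ : ℕ) = v + 1 := by
  classical
  have hn := c.hn
  have hm1 := c.hm1
  induction v using Nat.strong_induction_on with
  | _ v IH =>
  have hvm : v < m := by omega
  have hmm : m - 1 < m := by omega
  have h0m : 0 < m := by omega
  have hv1m : v + 1 < m := hv
  have hRlast : c.fR ⟨m - 1, hmm⟩ = n - 1 := c.Rk_last hil
  have hCzero : c.fC ⟨0, h0m⟩ = 0 := c.Ck_zero hil
  have hlast : τ ⟨m - 1, hmm⟩ = ⟨0, h0m⟩ := c.tau_last hil τ hadj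
  have key : ∀ u (huv : u < v) (hu : u < m), (τ ⟨u, hu⟩ : ℕ) = u + 1 :=
    fun u huv hu => IH u huv (by omega)
  by_contra hne
  replace hne : (τ ⟨v, hvm⟩ : ℕ) ≠ v + 1 := hne
  -- step 1 : the value w := τ v is ≥ v + 2
  have hwm : (τ ⟨v, hvm⟩ : ℕ) < m := (τ ⟨v, hvm⟩).isLt
  have hw0 : (τ ⟨v, hvm⟩ : ℕ) ≠ 0 := by
    intro h0
    have h0' : τ ⟨v, hvm⟩ = τ ⟨m - 1, hmm⟩ := by
      rw [hlast]
      exact Fin.ext (by simpa using h0)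
    have h1 := congrArg Fin.val (τ.injective h0')
    simp only [Fin.val_mk] at h1
    omega
  have hwv : ¬ ((τ ⟨v, hvm⟩ : ℕ) ≤ v) := by
    intro hle
    have hw1m : (τ ⟨v, hvm⟩ : ℕ) - 1 < m := by omega
    have h1 : (τ ⟨(τ ⟨v, hvm⟩ : ℕ) - 1, hw1m⟩ : ℕ) = (τ ⟨v, hvm⟩ : ℕ) - 1 + 1 :=
      key _ (by omega) hw1m
    have h2 : τ ⟨v, hvm⟩ = τ ⟨(τ ⟨v, hvm⟩ : ℕ) - 1, hw1m⟩ := Fin.ext (by omega)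
    have h3 := congrArg Fin.val (τ.injective h2)
    simp only [Fin.val_mk] at h3
    omega
  have hwv2 : v + 2 ≤ (τ ⟨v, hvm⟩ : ℕ) := by omega
  have hvp2m : v + 2 < m := by omega
  -- step 2 : k'' := τ.symm (v+1) has index ≥ v + 1
  have htk'' : τ (τ.symm ⟨v + 1, hv1m⟩) = ⟨v + 1, hv1m⟩ := Equiv.apply_symm_apply τ _
  have hk''ge : v + 1 ≤ ((τ.symm ⟨v + 1, hv1m⟩ : Fin m) : ℕ) := by
    by_contra hcon
    push_neg at hcon
    rcases Nat.lt_or_ge ((τ.symm ⟨v + 1, hv1m⟩ : Fin m) : ℕ) v with h' | h'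
    · have h1 := key _ h' (τ.symm ⟨v + 1, hv1m⟩).isLt
      have h2 : (⟨((τ.symm ⟨v + 1, hv1m⟩ : Fin m) : ℕ), (τ.symm ⟨v + 1, hv1m⟩).isLt⟩ : Fin m)
          = τ.symm ⟨v + 1, hv1m⟩ := Fin.ext rfl
      rw [h2, htk''] at h1
      simp only [Fin.val_mk] at h1
      omega
    · have hkv : τ.symm ⟨v + 1, hv1m⟩ = (⟨v, hvm⟩ : Fin m) :=
        Fin.ext (by simp only [Fin.val_mk]; omega)
      rw [hkv] at htk''
      have h2 := congrArg Fin.val htk''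
      simp only [Fin.val_mk] at h2
      omega
  -- step 3 : adjacency at v, handling the corner cases
  have hadjv := hadj ⟨v, hvm⟩
  have hnormal : c.fC (τ ⟨v, hvm⟩) ≤ c.fR ⟨v, hvm⟩ + 1 := by
    rcases hadjv with h | h | h | ⟨h1, h2⟩ | ⟨h1, h2⟩
    · omega
    · omega
    · omega
    · -- subcase (i) : fR v = 0 and fC (τ v) = n - 1 : pigeonhole contradiction
      exfalso
      have hv0 : v = 0 := by
        by_contra hv0'
        have : c.fR ⟨0, h0m⟩ < c.fR ⟨v, hvm⟩ :=
          c.hfR (by rw [Fin.mk_lt_mk]; omega)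
        omega
      have hkept := c.fR_kept ⟨v, hvm⟩
      rw [h1] at hkept
      have h1notI : (1 : ℕ) ∉ c.I := by simpa using hkept.1
      have hi1b := c.I_mem_bounds (c.iE_mem ⟨0, c.hp⟩)
      have hi1ne : c.iE ⟨0, c.hp⟩ ≠ 1 := by
        intro he
        exact h1notI (he ▸ c.iE_mem ⟨0, c.hp⟩)
      have hj3 : 3 ≤ c.jE ⟨0, c.hp⟩ := by
        have := c.hij
        omega
      have hj1n : c.jE ⟨0, c.hp⟩ ≤ n - 1 := (c.J_mem_bounds (c.jE_mem _)).2
      obtain ⟨hSCj, hSRj⟩ := c.cnt_j1_facts hil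
      have hSC1 : cnt c.SC 1 = 1 := by
        have h := cnt_enum_succ c.hfC c.hSC ⟨0, h0m⟩
        rw [hCzero] at h
        simpa using h
      have hSR1 : cnt c.SR 1 = 1 := by
        have h := cnt_enum_succ c.hfR c.hSR ⟨v, hvm⟩
        rw [h1] at h
        simp only [Fin.val_mk, Nat.zero_add] at h
        omega
      have hT'card : (Finset.univ.filter
          (fun j : Fin m => 1 ≤ c.fC j ∧ c.fC j < c.jE ⟨0, c.hp⟩ - 1)).card + 1
          = c.jE ⟨0, c.hp⟩ - 1 := by
        have h := card_filter_window c.hfC c.hSC (show (1 : ℕ) ≤ c.jE ⟨0, c.hp⟩ - 1 by omega)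
        rw [hSC1] at h
        rw [h, hSCj]
      have hA'card : (Finset.univ.filter
          (fun k : Fin m => 1 ≤ c.fR k ∧ c.fR k < c.jE ⟨0, c.hp⟩)).card + 1 + 2
          = c.jE ⟨0, c.hp⟩ := by
        have h := card_filter_window c.hfR c.hSR (show (1 : ℕ) ≤ c.jE ⟨0, c.hp⟩ by omega)
        rw [hSR1] at h
        rw [h]
        omega
      have hsub : ∀ j ∈ Finset.univ.filter
          (fun j : Fin m => 1 ≤ c.fC j ∧ c.fC j < c.jE ⟨0, c.hp⟩ - 1),
          τ.symm j ∈ Finset.univ.filter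
          (fun k : Fin m => 1 ≤ c.fR k ∧ c.fR k < c.jE ⟨0, c.hp⟩) := by
        intro j hj
        rw [Finset.mem_filter] at hj
        obtain ⟨-, hj1le, hjlt⟩ := hj
        have hadj' := hadj (τ.symm j)
        rw [Equiv.apply_symm_apply] at hadj'
        have hkne : τ.symm j ≠ ⟨v, hvm⟩ := by
          intro he
          have hjτ : j = τ ⟨v, hvm⟩ := by rw [← he, Equiv.apply_symm_apply]
          rw [← hjτ] at h2
          omega
        have hfRne : c.fR (τ.symm j) ≠ 0 := by
          intro he
          apply hkne
          apply c.hfR.injective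
          rw [he, h1]
        rw [Finset.mem_filter]
        refine ⟨Finset.mem_univ _, ?_, ?_⟩
        · rcases hadj' with h | h | h | ⟨ha, hb⟩ | ⟨ha, hb⟩ <;> omega
        · rcases hadj' with h | h | h | ⟨ha, hb⟩ | ⟨ha, hb⟩ <;> omega
      have hcard := Finset.card_le_card_of_injOn (fun j => τ.symm j) hsub
        (by intro a _ b _ hab; exact τ.symm.injective hab)
      omega
    · -- fR v = n - 1 : impossible since v < m - 1
      exfalso
      have h3 : (⟨v, hvm⟩ : Fin m) = ⟨m - 1, hmm⟩ := by
        apply c.hfR.injective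
        rw [hRlast]
        exact h1
      have h4 := congrArg Fin.val h3
      simp only [Fin.val_mk] at h4
      omega
  -- step 4 : combine
  have hup : c.fC ⟨v + 2, hvp2m⟩ ≤ c.fR ⟨v, hvm⟩ + 1 := by
    have hmono : c.fC ⟨v + 2, hvp2m⟩ ≤ c.fC (τ ⟨v, hvm⟩) :=
      c.hfC.monotone (by rw [Fin.le_def]; simp only [Fin.val_mk]; omega)
    omega
  have hadjk'' := hadj (τ.symm ⟨v + 1, hv1m⟩)
  rw [htk''] at hadjk''
  have hlow : c.fR ⟨v + 1, hv1m⟩ ≤ c.fC ⟨v + 1, hv1m⟩ + 1 := by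
    have hmono : c.fR ⟨v + 1, hv1m⟩ ≤ c.fR (τ.symm ⟨v + 1, hv1m⟩) :=
      c.hfR.monotone (by rw [Fin.le_def]; simp only [Fin.val_mk]; omega)
    rcases hadjk'' with h | h | h | ⟨ha, hb⟩ | ⟨ha, hb⟩
    · omega
    · omega
    · omega
    · exfalso
      have : c.fR ⟨0, h0m⟩ < c.fR (τ.symm ⟨v + 1, hv1m⟩) :=
        c.hfR (by rw [Fin.lt_def]; simp only [Fin.val_mk]; omega)
      omega
    · exfalso
      have h3 : (⟨v + 1, hv1m⟩ : Fin m) = ⟨0, h0m⟩ := by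
        apply c.hfC.injective
        rw [hCzero]
        exact hb
      have h4 := congrArg Fin.val h3
      simp only [Fin.val_mk] at h4
      omega
  have hmono2 : c.fC ⟨v + 1, hv1m⟩ < c.fC ⟨v + 2, hvp2m⟩ :=
    c.hfC (by rw [Fin.mk_lt_mk]; omega)
  have hmono3 : c.fR ⟨v, hvm⟩ < c.fR ⟨v + 1, hv1m⟩ :=
    c.hfR (by rw [Fin.mk_lt_mk]; omega)
  have hceq : c.fC ⟨v + 1, hv1m⟩ = c.fR ⟨v, hvm⟩ := by omega
  -- step 5 : parity contradiction
  have hSRr : cnt c.SR (c.fR ⟨v, hvm⟩ + 1) = v + 1 := by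
    have h := cnt_enum_succ c.hfR c.hSR ⟨v, hvm⟩
    simpa using h
  have hSCr : cnt c.SC (c.fR ⟨v, hvm⟩ + 1) = v + 2 := by
    have h := cnt_enum_succ c.hfC c.hSC ⟨v + 1, hv1m⟩
    rw [hceq] at h
    simpa using h
  have hrn : c.fR ⟨v, hvm⟩ < n := c.fR_lt_n _
  have hSRe := c.cntSR (show c.fR ⟨v, hvm⟩ + 1 ≤ n by omega)
  have hSCe := c.cntSC (show c.fR ⟨v, hvm⟩ + 1 ≤ n by omega)
  have hkeptR := c.fR_kept ⟨v, hvm⟩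
  have hkeptC := c.fC_kept ⟨v + 1, hv1m⟩
  rw [hceq] at hkeptC
  have hcI2 : cnt c.I (c.fR ⟨v, hvm⟩ + 1 + 1) = cnt c.I (c.fR ⟨v, hvm⟩ + 1) :=
    cnt_succ_of_not_mem hkeptR.1
  have hcI1 : cnt c.I (c.fR ⟨v, hvm⟩ + 1) = cnt c.I (c.fR ⟨v, hvm⟩) :=
    cnt_succ_of_not_mem hkeptR.2
  have hcJ2 : cnt c.J (c.fR ⟨v, hvm⟩ + 1 + 1) = cnt c.J (c.fR ⟨v, hvm⟩ + 1) :=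
    cnt_succ_of_not_mem hkeptC.1
  have hcJ1 : cnt c.J (c.fR ⟨v, hvm⟩ + 1) = cnt c.J (c.fR ⟨v, hvm⟩) :=
    cnt_succ_of_not_mem hkeptC.2
  omega

end Interleaved

/-- the complement edge set -/
def SE : Finset ℕ := (Finset.range n).filter (fun r => r + 1 ∉ c.I ∧ r + 1 ∉ c.J)

/-- the edge label used by the `k`-th entry of the unique nonzero transversal -/
def E : Fin m → ℕ := fun k =>
  if h : (k : ℕ) + 1 < m then min (c.fR k) (c.fC ⟨(k : ℕ) + 1, h⟩) else n - 1

lemma SE_card : c.SE.card = m := by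
  classical
  have hn := c.hn
  have h1 : ((Finset.range n).filter (fun r => r + 1 ∈ c.I)).card = c.I.card := by
    refine Finset.card_nbij' (fun r => r + 1) (fun i => i - 1) ?_ ?_ ?_ ?_
    · intro r hr
      simp only [Finset.mem_coe, Finset.mem_filter] at hr
      exact hr.2
    · intro i hi
      have hb := c.I_mem_bounds hi
      simp only [Finset.mem_coe, Finset.mem_filter, Finset.mem_range]
      constructor
      · omega
      · rw [show i - 1 + 1 = i by omega]; exact hi
    · intro r _
      show r + 1 - 1 = r
      omega
    · intro i hi
      have hb := c.I_mem_bounds hi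
      show i - 1 + 1 = i
      omega
  have h2 : ((Finset.range n).filter (fun r => r + 1 ∈ c.J)).card = c.J.card := by
    refine Finset.card_nbij' (fun r => r + 1) (fun i => i - 1) ?_ ?_ ?_ ?_
    · intro r hr
      simp only [Finset.mem_coe, Finset.mem_filter] at hr
      exact hr.2
    · intro i hi
      have hb := c.J_mem_bounds hi
      simp only [Finset.mem_coe, Finset.mem_filter, Finset.mem_range]
      constructor
      · omega
      · rw [show i - 1 + 1 = i by omega]; exact hi
    · intro r _
      show r + 1 - 1 = r
      omega
    · intro i hi
      have hb := c.J_mem_bounds hi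
      show i - 1 + 1 = i
      omega
  have hd : Disjoint ((Finset.range n).filter (fun r => r + 1 ∈ c.I))
      ((Finset.range n).filter (fun r => r + 1 ∈ c.J)) := by
    rw [Finset.disjoint_filter]
    intro r _ hI hJ
    exact absurd hJ (Finset.disjoint_left.1 c.hIJ hI)
  have hneg : (Finset.range n).filter (fun r => ¬(r + 1 ∉ c.I ∧ r + 1 ∉ c.J))
      = ((Finset.range n).filter (fun r => r + 1 ∈ c.I)) ∪
        ((Finset.range n).filter (fun r => r + 1 ∈ c.J)) := by
    ext r
    simp only [Finset.mem_filter, Finset.mem_union, Finset.mem_range]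
    tauto
  have hsplit := Finset.card_filter_add_card_filter_not
    (s := Finset.range n) (p := fun r => r + 1 ∉ c.I ∧ r + 1 ∉ c.J)
  rw [Finset.card_range, hneg, Finset.card_union_of_disjoint hd, h1, h2] at hsplit
  have hm := c.hm
  have h2p := c.two_p_lt_n
  have hic := c.hIcard
  have hjc := c.hJcard
  unfold SE
  omega

lemma target_eq : (Finset.Icc 1 n) \ (c.I ∪ c.J) = c.SE.image (fun r => r + 1) := by
  classical
  ext s
  simp only [Finset.mem_sdiff, Finset.mem_Icc, Finset.mem_union, Finset.mem_image,
    SE, Finset.mem_filter, Finset.mem_range]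
  constructor
  · rintro ⟨⟨h1, h2⟩, h3⟩
    push_neg at h3
    refine ⟨s - 1, ⟨by omega, ?_, ?_⟩, by omega⟩
    · rw [show s - 1 + 1 = s by omega]; exact h3.1
    · rw [show s - 1 + 1 = s by omega]; exact h3.2
  · rintro ⟨r, ⟨hr, h1, h2⟩, rfl⟩
    exact ⟨⟨by omega, by omega⟩, by tauto⟩

section Interleaved2

variable (hil : c.Interleaved)
include hil

lemma E_facts (k : Fin m) :
    (c.E k < n ∧ c.E k + 1 ∉ c.I ∧ c.E k + 1 ∉ c.J) ∧
    ((k : ℕ) + 1 < m → c.E k ≤ c.fR k ∧ c.fR k ≤ c.E k + 1) ∧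
    ((k : ℕ) + 1 = m → c.E k = n - 1) := by
  have hn := c.hn
  unfold E
  by_cases h : (k : ℕ) + 1 < m
  · rw [dif_pos h]
    rcases c.step hil k h with hs | hs
    · have hmin : min (c.fR k) (c.fC ⟨(k : ℕ) + 1, h⟩) = c.fR k := by omega
      rw [hmin]
      have hkR := c.fR_kept k
      have hkC := c.fC_kept ⟨(k : ℕ) + 1, h⟩
      rw [hs] at hkC
      refine ⟨⟨c.fR_lt_n k, hkR.1, hkC.2⟩, fun _ => by omega, fun hc => by omega⟩
    · have hmin : min (c.fR k) (c.fC ⟨(k : ℕ) + 1, h⟩) = c.fC ⟨(k : ℕ) + 1, h⟩ := by omega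
      rw [hmin]
      have hkR := c.fR_kept k
      have hkC := c.fC_kept ⟨(k : ℕ) + 1, h⟩
      rw [← hs] at hkR
      refine ⟨⟨by have := c.fC_lt_n ⟨(k : ℕ) + 1, h⟩; omega, hkR.2, hkC.1⟩,
        fun _ => by omega, fun hc => by omega⟩
  · rw [dif_neg h]
    have hnI : n ∉ c.I := by
      intro hmem
      have := (c.I_mem_bounds hmem).2
      omega
    have hnJ : n ∉ c.J := by
      intro hmem
      have := (c.J_mem_bounds hmem).2
      omega
    rw [show n - 1 + 1 = n by omega]
    exact ⟨⟨by omega, hnI, hnJ⟩, fun hc => absurd hc h, fun _ => rfl⟩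

lemma E_mem (k : Fin m) : c.E k ∈ c.SE := by
  obtain ⟨⟨h1, h2, h3⟩, -, -⟩ := c.E_facts hil k
  unfold SE
  simp only [Finset.mem_filter, Finset.mem_range]
  exact ⟨h1, h2, h3⟩

lemma E_inj_lt {k k' : Fin m} (hkk : (k : ℕ) < (k' : ℕ)) : c.E k ≠ c.E k' := by
  intro heq
  have hm1 := c.hm1
  obtain ⟨-, hEk, hlast⟩ := c.E_facts hil k
  obtain ⟨-, hEk', hlast'⟩ := c.E_facts hil k'
  have hkm : (k : ℕ) + 1 < m := by
    have := k'.isLt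
    omega
  obtain ⟨hEk1, hEk2⟩ := hEk hkm
  have hfRlt : c.fR k < c.fR k' := c.hfR (by rw [Fin.lt_def]; exact hkk)
  by_cases h' : (k' : ℕ) + 1 < m
  · obtain ⟨hEk1', hEk2'⟩ := hEk' h'
    -- forces E k = fR k, E k' = fR k' - 1 and fR k' = fR k + 1
    have he1 : c.E k = c.fR k := by omega
    have he2 : c.E k' + 1 = c.fR k' := by omega
    have he3 : c.fR k' = c.fR k + 1 := by omega
    -- then fC (k+1) = fR k + 1 and fC (k'+1) = fR k' - 1 = fR k
    unfold E at he1 he2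
    rw [dif_pos hkm] at he1
    rw [dif_pos h'] at he2
    rcases c.step hil k hkm with hs | hs
    · rcases c.step hil k' h' with hs' | hs'
      · omega
      · -- fC ⟨k+1⟩ = fR k + 1, fC ⟨k'+1⟩ + 1 = fR k' = fR k + 1
        have hmono : c.fC ⟨(k : ℕ) + 1, hkm⟩ < c.fC ⟨(k' : ℕ) + 1, h'⟩ :=
          c.hfC (by rw [Fin.mk_lt_mk]; omega)
        omega
    · omega
  · have hkl : (k' : ℕ) + 1 = m := by
      have := k'.isLt
      omega
    have hE' := hlast' hkl
    -- E k ≤ fR k < fR (m-1) = n-1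
    have hlt : c.fR k' = n - 1 := by
      have h := c.Rk_last hil
      have : k' = (⟨m - 1, by omega⟩ : Fin m) := Fin.ext (by simp only [Fin.val_mk]; omega)
      rw [this]
      exact h
    omega

lemma E_inj : Function.Injective c.E := by
  intro k k' h
  rcases lt_trichotomy ((k : ℕ)) ((k' : ℕ)) with hlt | heq | hgt
  · exact absurd h (c.E_inj_lt hil hlt)
  · exact Fin.ext heq
  · exact absurd h.symm (c.E_inj_lt hil hgt)

lemma prod_E : (∏ k : Fin m, xv n (n + c.E k)) = ∏ r ∈ c.SE, xv n (n + r) := by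
  classical
  have himg : Finset.univ.image c.E = c.SE := by
    apply Finset.eq_of_subset_of_card_le
    · intro x hx
      obtain ⟨k, -, rfl⟩ := Finset.mem_image.1 hx
      exact c.E_mem hil k
    · rw [Finset.card_image_of_injective _ (c.E_inj hil), Finset.card_univ,
        Fintype.card_fin, c.SE_card]
  rw [← himg, Finset.prod_image (by intro a _ b _ h; exact c.E_inj hil h)]

end Interleaved2

section DetInterleaved

variable (hil : c.Interleaved)
include hil

lemma det_interleaved :
    ((LW n).submatrix c.Rk c.Ck).det
      = -∏ r ∈ (Finset.Icc 1 n) \ (c.I ∪ c.J), xv n (n + r - 1) := by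
  classical
  have hn := c.hn
  obtain ⟨q, hq⟩ : ∃ q, m = q + 1 := ⟨m - 1, by have := c.hm1; omega⟩
  subst hq
  -- entry values along the rotation
  have hval : ∀ k : Fin (q + 1),
      (LW n).submatrix c.Rk c.Ck k (finRotate (q + 1) k) = -xv n (n + c.E k) := by
    intro k
    by_cases hk : (k : ℕ) + 1 < q + 1
    · have hrot : finRotate (q + 1) k = ⟨(k : ℕ) + 1, hk⟩ := by
        apply Fin.ext
        rw [finRotate_succ_apply, Fin.val_add_one_of_lt (by rw [Fin.lt_def, Fin.val_last]; omega)]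
      rw [hrot, Matrix.submatrix_apply]
      rcases c.step hil k hk with hs | hs
      · rw [LW_right (c.Rk k) (c.Ck ⟨(k : ℕ) + 1, hk⟩) hs]
        have hE : c.E k = c.fR k := by
          unfold E
          rw [dif_pos hk]
          omega
        rw [hE]
        rfl
      · rw [LW_left (c.Rk k) (c.Ck ⟨(k : ℕ) + 1, hk⟩) hs.symm]
        have hE : c.E k = c.fC ⟨(k : ℕ) + 1, hk⟩ := by
          unfold E
          rw [dif_pos hk]
          omega
        rw [hE]
        rfl
    · have hkq : (k : ℕ) = q := by have := k.isLt; omega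
      have hkeq : k = (⟨q + 1 - 1, Nat.lt_succ_self q⟩ : Fin (q + 1)) :=
        Fin.ext (by simp only [Fin.val_mk]; omega)
      have hrot : finRotate (q + 1) k = (⟨0, Nat.succ_pos q⟩ : Fin (q + 1)) := by
        have h1 : k = Fin.last q := Fin.ext (by rw [Fin.val_last]; omega)
        rw [h1]
        exact finRotate_last
      rw [hrot, Matrix.submatrix_apply]
      have hR : (c.Rk k : ℕ) = n - 1 := by
        have h := c.Rk_last hil
        rw [← hkeq] at h
        exact h
      have hC : (c.Ck (⟨0, Nat.succ_pos q⟩ : Fin (q + 1)) : ℕ) = 0 := c.Ck_zero hil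
      rw [LW_corner hn _ _ hR hC]
      have hE : c.E k = n - 1 := by
        unfold E
        rw [dif_neg (by omega)]
      rw [hE]
      congr 2
      omega
  -- the determinant
  rw [Matrix.det_apply']
  have hzero : ∀ σ ∈ (Finset.univ : Finset (Equiv.Perm (Fin (q + 1)))),
      σ ≠ (finRotate (q + 1))⁻¹ →
      ((Equiv.Perm.sign σ : ℤ) : MvPolynomial (Fin (2 * n)) ℤ) *
        ∏ i, (LW n).submatrix c.Rk c.Ck (σ i) i = 0 := by
    intro σ _ hσ
    have hτ : ¬ ∀ k, Adj n (c.fR k) (c.fC (σ⁻¹ k)) := by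
      intro hall
      apply hσ
      have heq : σ⁻¹ = finRotate (q + 1) := by
        apply Equiv.ext
        intro k
        by_cases hk : (k : ℕ) + 1 < q + 1
        · have h1 := c.tau_forced hil σ⁻¹ hall (k : ℕ) hk
          rw [show (⟨(k : ℕ), k.isLt⟩ : Fin (q + 1)) = k from Fin.ext rfl] at h1
          apply Fin.ext
          rw [finRotate_succ_apply,
            Fin.val_add_one_of_lt (by rw [Fin.lt_def, Fin.val_last]; omega)]
          exact h1
        · have h1 := c.tau_last hil σ⁻¹ hall
          have hk' : k = (⟨q + 1 - 1, Nat.lt_succ_self q⟩ : Fin (q + 1)) :=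
            Fin.ext (by simp only [Fin.val_mk]; have := k.isLt; omega)
          have h2 : k = Fin.last q := Fin.ext (by rw [Fin.val_last]; have := k.isLt; omega)
          calc σ⁻¹ k = σ⁻¹ ⟨q + 1 - 1, Nat.lt_succ_self q⟩ := by rw [← hk']
            _ = ⟨0, c.hm1⟩ := h1
            _ = finRotate (q + 1) k := by
                rw [h2, finRotate_last]
                rfl
      rw [← heq, inv_inv]
    push_neg at hτ
    obtain ⟨k, hk⟩ := hτ
    have h0 : ((LW n).submatrix c.Rk c.Ck) (σ (σ⁻¹ k)) (σ⁻¹ k) = 0 := by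
      rw [show σ (σ⁻¹ k) = k from Equiv.apply_symm_apply σ k, Matrix.submatrix_apply]
      exact LW_eq_zero_of_not_adj _ _ hk
    have hz := Finset.prod_eq_zero (f := fun i => (LW n).submatrix c.Rk c.Ck (σ i) i)
      (Finset.mem_univ (σ⁻¹ k)) h0
    rw [hz, mul_zero]
  rw [Finset.sum_eq_single_of_mem ((finRotate (q + 1))⁻¹) (Finset.mem_univ _) hzero]
  have hprod : (∏ i, ((LW n).submatrix c.Rk c.Ck) ((finRotate (q + 1))⁻¹ i) i)
      = ∏ k, ((LW n).submatrix c.Rk c.Ck) k (finRotate (q + 1) k) := by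
    rw [← Equiv.prod_comp (finRotate (q + 1))
      (fun i => ((LW n).submatrix c.Rk c.Ck) ((finRotate (q + 1))⁻¹ i) i)]
    apply Finset.prod_congr rfl
    intro k _
    congr 1
    exact Equiv.symm_apply_apply _ _
  rw [hprod]
  have hprod2 : (∏ k, ((LW n).submatrix c.Rk c.Ck) k (finRotate (q + 1) k))
      = (-1) ^ (q + 1) * ∏ k : Fin (q + 1), xv n (n + c.E k) := by
    rw [Finset.prod_congr rfl (fun k _ => hval k)]
    rw [Finset.prod_congr rfl
      (fun k _ => show -xv n (n + c.E k) = (-1) * xv n (n + c.E k) by ring)]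
    rw [Finset.prod_mul_distrib, Finset.prod_const, Finset.card_univ, Fintype.card_fin]
  rw [hprod2, c.prod_E hil]
  have hsign : Equiv.Perm.sign ((finRotate (q + 1))⁻¹) = (-1) ^ q := by
    rw [Equiv.Perm.sign_inv, sign_finRotate, Nat.add_sub_cancel]
  rw [hsign]
  have htgt : (∏ r ∈ (Finset.Icc 1 n) \ (c.I ∪ c.J), xv n (n + r - 1))
      = ∏ r ∈ c.SE, xv n (n + r) := by
    rw [c.target_eq, Finset.prod_image (by intro a _ b _ h; exact Nat.add_right_cancel h)]
    apply Finset.prod_congr rfl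
    intro r _
    congr 1
  rw [htgt]
  have hcast : (((((-1) ^ q : ℤˣ) : ℤ)) : MvPolynomial (Fin (2 * n)) ℤ)
      = (-1 : MvPolynomial (Fin (2 * n)) ℤ) ^ q := by
    push_cast
    ring
  rw [hcast]
  have hodd : (-1 : MvPolynomial (Fin (2 * n)) ℤ) ^ q * (-1) ^ (q + 1) = -1 := by
    rw [← pow_add]
    exact Odd.neg_one_pow ⟨q, by omega⟩
  calc (-1 : MvPolynomial (Fin (2 * n)) ℤ) ^ q *
        ((-1) ^ (q + 1) * ∏ r ∈ c.SE, xv n (n + r))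
      = ((-1) ^ q * (-1) ^ (q + 1)) * ∏ r ∈ c.SE, xv n (n + r) := by ring
    _ = -∏ r ∈ c.SE, xv n (n + r) := by rw [hodd]; ring

end DetInterleaved

/-! ### The non-interleaved case -/

lemma iE_ne_jE (a b : Fin p) : c.iE a ≠ c.jE b := by
  intro h
  have h1 := c.iE_mem a
  have h2 := c.jE_mem b
  rw [h] at h1
  exact Finset.disjoint_left.1 c.hIJ h1 h2

lemma not_interleaved_cases (hnot : ¬ c.Interleaved) :
    (∃ t t' : Fin p, (t : ℕ) + 1 = (t' : ℕ) ∧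
      (∀ s : Fin p, ¬(c.jE t < c.iE s ∧ c.iE s < c.jE t'))) ∨
    (∃ t t' : Fin p, (t : ℕ) + 1 = (t' : ℕ) ∧
      (∀ s : Fin p, ¬(c.iE t < c.jE s ∧ c.jE s < c.iE t'))) := by
  classical
  have hQ : ∃ k : ℕ, ((∃ a : Fin p, (a : ℕ) = k ∧ c.jE a < c.iE a) ∨
      (∃ a b : Fin p, (a : ℕ) = k ∧ (b : ℕ) = k + 1 ∧ c.iE b < c.jE a)) := by
    by_cases hX : ∀ a, c.iE a < c.jE a
    · have hY : ¬ ∀ a b : Fin p, (a : ℕ) + 1 = (b : ℕ) → c.jE a < c.iE b := fun hY' =>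
        hnot ⟨hX, hY'⟩
      push_neg at hY
      obtain ⟨a, b, hab, hba⟩ := hY
      have hne := c.iE_ne_jE b a
      exact ⟨(a : ℕ), Or.inr ⟨a, b, rfl, by omega, by omega⟩⟩
    · push_neg at hX
      obtain ⟨a, ha⟩ := hX
      have hne := c.iE_ne_jE a a
      exact ⟨(a : ℕ), Or.inl ⟨a, rfl, by omega⟩⟩
  have hspec := Nat.find_spec hQ
  have hmin := fun k (hk : k < Nat.find hQ) => Nat.find_min hQ hk
  set k₀ := Nat.find hQ with hk₀d
  have hgood1 : ∀ a : Fin p, (a : ℕ) < k₀ → c.iE a < c.jE a := by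
    intro a ha
    have h := hmin _ ha
    push_neg at h
    have h1 := h.1 a rfl
    have hne := c.iE_ne_jE a a
    omega
  have hgood2 : ∀ a b : Fin p, (a : ℕ) + 1 = (b : ℕ) → (a : ℕ) < k₀ → c.jE a < c.iE b := by
    intro a b hab ha
    have h := hmin _ ha
    push_neg at h
    have h1 := h.2 a b rfl (by omega)
    have hne := c.iE_ne_jE b a
    omega
  rcases hspec with ⟨a, hak, hlt⟩ | ⟨a, b, hak, hbk, hlt⟩
  · -- jE a < iE a : two consecutive j's with no i between
    have ha1 : 1 ≤ (a : ℕ) := by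
      by_contra h0
      have ha0 : a = ⟨0, c.hp⟩ := Fin.ext (by simp only [Fin.val_mk]; omega)
      rw [ha0] at hlt
      have := c.hij
      omega
    have ht0p : (a : ℕ) - 1 < p := by have := a.isLt; omega
    left
    refine ⟨⟨(a : ℕ) - 1, ht0p⟩, a, by simp only [Fin.val_mk]; omega, ?_⟩
    rintro s ⟨hs1, hs2⟩
    rcases Nat.lt_or_ge (s : ℕ) ((a : ℕ)) with hsc | hsc
    · have g1 := hgood1 s (by omega)
      have g2 : c.jE s ≤ c.jE ⟨(a : ℕ) - 1, ht0p⟩ :=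
        c.hjE.monotone (by rw [Fin.le_def]; simp only [Fin.val_mk]; omega)
      omega
    · have g1 : c.iE a ≤ c.iE s := c.hiE.monotone (by rw [Fin.le_def]; omega)
      omega
  · -- iE b < jE a with b = a + 1 : two consecutive i's with no j between
    right
    refine ⟨a, b, by omega, ?_⟩
    rintro s ⟨hs1, hs2⟩
    rcases Nat.lt_or_ge (s : ℕ) ((a : ℕ)) with hsc | hsc
    · have hk1 : 1 ≤ (a : ℕ) := by omega
      have ht1p : (a : ℕ) - 1 < p := by have := a.isLt; omega
      have g2 := hgood2 ⟨(a : ℕ) - 1, ht1p⟩ a (by simp only [Fin.val_mk]; omega) (by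
        simp only [Fin.val_mk]; omega)
      have g3 : c.jE s ≤ c.jE ⟨(a : ℕ) - 1, ht1p⟩ :=
        c.hjE.monotone (by rw [Fin.le_def]; simp only [Fin.val_mk]; omega)
      omega
    · have g1 : c.jE a ≤ c.jE s := c.hjE.monotone (by rw [Fin.le_def]; omega)
      omega

lemma det_not_interleaved (hnot : ¬ c.Interleaved) :
    ((LW n).submatrix c.Rk c.Ck).det = 0 := by
  classical
  have hn := c.hn
  rw [Matrix.det_apply']
  apply Finset.sum_eq_zero
  intro σ _
  suffices hex : ∃ i, (LW n).submatrix c.Rk c.Ck (σ i) i = 0 by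
    obtain ⟨i, hi⟩ := hex
    have hz := Finset.prod_eq_zero (f := fun i => (LW n).submatrix c.Rk c.Ck (σ i) i)
      (Finset.mem_univ i) hi
    rw [hz, mul_zero]
  by_contra hcon
  push_neg at hcon
  have hadj : ∀ i, Adj n (c.fR (σ i)) (c.fC i) := by
    intro i
    by_contra hnadj
    exact hcon i (LW_eq_zero_of_not_adj _ _ hnadj)
  rcases c.not_interleaved_cases hnot with ⟨t, t', htt, hno⟩ | ⟨t, t', htt, hno⟩
  · -- case A : consecutive j's, no i between
    have hjb := c.J_mem_bounds (c.jE_mem t)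
    have hj'b := c.J_mem_bounds (c.jE_mem t')
    have hjj' : c.jE t < c.jE t' := c.hjE (by rw [Fin.lt_def]; omega)
    have hj2 : c.jE t + 2 ≤ c.jE t' := by
      have hcons := c.hJcons _ (c.jE_mem t)
      have hmem := c.jE_mem t'
      by_contra hcc
      have : c.jE t' = c.jE t + 1 := by omega
      rw [this] at hmem
      exact hcons hmem
    have hIgap : ∀ x, x ∈ c.I → x < c.jE t' + 1 → x < c.jE t := by
      intro x hx hxlt
      obtain ⟨s, rfl⟩ := (c.hiEr x).1 hx
      have h1 := c.iE_ne_jE s t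
      have h2 := c.iE_ne_jE s t'
      have h3 := hno s
      omega
    have hIa : cnt c.I (c.jE t' + 1) = cnt c.I (c.jE t) := by
      unfold cnt
      congr 1
      ext x
      simp only [Finset.mem_filter]
      constructor
      · rintro ⟨hx, hlt⟩; exact ⟨hx, hIgap x hx hlt⟩
      · rintro ⟨hx, hlt⟩; exact ⟨hx, by omega⟩
    have hIb : cnt c.I (c.jE t') = cnt c.I (c.jE t) := by
      unfold cnt
      congr 1
      ext x
      simp only [Finset.mem_filter]
      constructor
      · rintro ⟨hx, hlt⟩; exact ⟨hx, hIgap x hx (by omega)⟩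
      · rintro ⟨hx, hlt⟩; exact ⟨hx, by omega⟩
    have hIc : cnt c.I (c.jE t + 1) = cnt c.I (c.jE t) := by
      unfold cnt
      congr 1
      ext x
      simp only [Finset.mem_filter]
      constructor
      · rintro ⟨hx, hlt⟩; exact ⟨hx, hIgap x hx (by omega)⟩
      · rintro ⟨hx, hlt⟩; exact ⟨hx, by omega⟩
    have hAwin := card_filter_window c.hfR c.hSR (le_of_lt hjj')
    have hSRj := c.cntSR (show c.jE t ≤ n by omega)
    have hSRj' := c.cntSR (show c.jE t' ≤ n by omega)
    have hBwin := card_filter_window c.hfC c.hSC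
      (show c.jE t - 1 ≤ c.jE t' + 1 by omega)
    have hSCb := c.cntSC (show c.jE t - 1 ≤ n by omega)
    have hSCb' := c.cntSC (show c.jE t' + 1 ≤ n by omega)
    rw [show c.jE t - 1 + 1 = c.jE t by omega] at hSCb
    have hJ2 : cnt c.J (c.jE t + 1) = cnt c.J (c.jE t) + 1 := cnt_succ_of_mem (c.jE_mem t)
    have hJ3 : cnt c.J (c.jE t' + 1) = cnt c.J (c.jE t') + 1 := cnt_succ_of_mem (c.jE_mem t')
    have hJ4 : cnt c.J (c.jE t + 1) ≤ cnt c.J (c.jE t') := cnt_mono _ (by omega)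
    have hJ5 : cnt c.J (c.jE t' + 1) ≤ cnt c.J (c.jE t' + 1 + 1) := cnt_mono _ (by omega)
    have hJ6 : cnt c.J (c.jE t - 1) ≤ cnt c.J (c.jE t) := cnt_mono _ (by omega)
    have hsub : ∀ k ∈ Finset.univ.filter
        (fun k : Fin m => c.jE t ≤ c.fR k ∧ c.fR k < c.jE t'),
        σ⁻¹ k ∈ Finset.univ.filter
        (fun i : Fin m => c.jE t - 1 ≤ c.fC i ∧ c.fC i < c.jE t' + 1) := by
      intro k hk
      rw [Finset.mem_filter] at hk
      obtain ⟨-, hk1, hk2⟩ := hk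
      have ha := hadj (σ⁻¹ k)
      rw [show σ (σ⁻¹ k) = k from Equiv.apply_symm_apply σ k] at ha
      rw [Finset.mem_filter]
      refine ⟨Finset.mem_univ _, ?_⟩
      rcases ha with h | h | h | ⟨h1, h2⟩ | ⟨h1, h2⟩ <;> omega
    have hcard := Finset.card_le_card_of_injOn (fun k => σ⁻¹ k) hsub
      (by intro a _ b _ hab; exact σ.symm.injective hab)
    omega
  · -- case B : consecutive i's, no j between
    have hib := c.I_mem_bounds (c.iE_mem t)
    have hi'b := c.I_mem_bounds (c.iE_mem t')
    have hii' : c.iE t < c.iE t' := c.hiE (by rw [Fin.lt_def]; omega)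
    have hi2 : c.iE t + 2 ≤ c.iE t' := by
      have hcons := c.hIcons _ (c.iE_mem t)
      have hmem := c.iE_mem t'
      by_contra hcc
      have : c.iE t' = c.iE t + 1 := by omega
      rw [this] at hmem
      exact hcons hmem
    have hJgap : ∀ x, x ∈ c.J → x < c.iE t' + 1 → x < c.iE t := by
      intro x hx hxlt
      obtain ⟨s, rfl⟩ := (c.hjEr x).1 hx
      have h1 := c.iE_ne_jE t s
      have h2 := c.iE_ne_jE t' s
      have h3 := hno s
      omega
    have hJa : cnt c.J (c.iE t' + 1) = cnt c.J (c.iE t) := by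
      unfold cnt
      congr 1
      ext x
      simp only [Finset.mem_filter]
      constructor
      · rintro ⟨hx, hlt⟩; exact ⟨hx, hJgap x hx hlt⟩
      · rintro ⟨hx, hlt⟩; exact ⟨hx, by omega⟩
    have hJb : cnt c.J (c.iE t') = cnt c.J (c.iE t) := by
      unfold cnt
      congr 1
      ext x
      simp only [Finset.mem_filter]
      constructor
      · rintro ⟨hx, hlt⟩; exact ⟨hx, hJgap x hx (by omega)⟩
      · rintro ⟨hx, hlt⟩; exact ⟨hx, by omega⟩
    have hJc : cnt c.J (c.iE t + 1) = cnt c.J (c.iE t) := by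
      unfold cnt
      congr 1
      ext x
      simp only [Finset.mem_filter]
      constructor
      · rintro ⟨hx, hlt⟩; exact ⟨hx, hJgap x hx (by omega)⟩
      · rintro ⟨hx, hlt⟩; exact ⟨hx, by omega⟩
    have hAwin := card_filter_window c.hfC c.hSC (le_of_lt hii')
    have hSCi := c.cntSC (show c.iE t ≤ n by omega)
    have hSCi' := c.cntSC (show c.iE t' ≤ n by omega)
    have hBwin := card_filter_window c.hfR c.hSR
      (show c.iE t - 1 ≤ c.iE t' + 1 by omega)
    have hSRb := c.cntSR (show c.iE t - 1 ≤ n by omega)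
    have hSRb' := c.cntSR (show c.iE t' + 1 ≤ n by omega)
    rw [show c.iE t - 1 + 1 = c.iE t by omega] at hSRb
    have hI2 : cnt c.I (c.iE t + 1) = cnt c.I (c.iE t) + 1 := cnt_succ_of_mem (c.iE_mem t)
    have hI3 : cnt c.I (c.iE t' + 1) = cnt c.I (c.iE t') + 1 := cnt_succ_of_mem (c.iE_mem t')
    have hI4 : cnt c.I (c.iE t + 1) ≤ cnt c.I (c.iE t') := cnt_mono _ (by omega)
    have hI5 : cnt c.I (c.iE t' + 1) ≤ cnt c.I (c.iE t' + 1 + 1) := cnt_mono _ (by omega)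
    have hI6 : cnt c.I (c.iE t - 1) ≤ cnt c.I (c.iE t) := cnt_mono _ (by omega)
    have hsub : ∀ i₀ ∈ Finset.univ.filter
        (fun i₀ : Fin m => c.iE t ≤ c.fC i₀ ∧ c.fC i₀ < c.iE t'),
        σ i₀ ∈ Finset.univ.filter
        (fun k : Fin m => c.iE t - 1 ≤ c.fR k ∧ c.fR k < c.iE t' + 1) := by
      intro i₀ hi₀
      rw [Finset.mem_filter] at hi₀
      obtain ⟨-, hk1, hk2⟩ := hi₀
      have ha := hadj i₀
      rw [Finset.mem_filter]
      refine ⟨Finset.mem_univ _, ?_⟩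
      rcases ha with h | h | h | ⟨h1, h2⟩ | ⟨h1, h2⟩ <;> omega
    have hcard := Finset.card_le_card_of_injOn (fun i₀ => σ i₀) hsub
      (by intro a _ b _ hab; exact σ.injective hab)
    omega

end Ctx

end Stmt13

theorem stmt_13 (n p : ℕ) (hn : 3 ≤ n) (hp : 1 ≤ p)
    (I J : Finset ℕ)
    (hIsub : I ⊆ Finset.Icc 1 (n - 1)) (hJsub : J ⊆ Finset.Icc 1 (n - 1))
    (hIJ : Disjoint I J) (hIne : I.Nonempty) (hJne : J.Nonempty)
    (hIcard : I.card = p) (hJcard : J.card = p)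
    (hIcons : ∀ x ∈ I, x + 1 ∉ I) (hJcons : ∀ y ∈ J, y + 1 ∉ J)
    (iE jE : Fin p → ℕ)
    (hiE : StrictMono iE) (hiEr : ∀ x, x ∈ Set.range iE ↔ x ∈ I)
    (hjE : StrictMono jE) (hjEr : ∀ x, x ∈ Set.range jE ↔ x ∈ J)
    (hij : iE ⟨0, hp⟩ < jE ⟨0, hp⟩)
    (Rk Ck : Fin (n - 2 * p) → Fin n)
    (hRk : StrictMono Rk)
    (hRkr : ∀ r : Fin n, r ∈ Set.range Rk ↔ ((r : ℕ) + 1 ∉ I ∧ (r : ℕ) ∉ I))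
    (hCk : StrictMono Ck)
    (hCkr : ∀ r : Fin n, r ∈ Set.range Ck ↔ ((r : ℕ) + 1 ∉ J ∧ (r : ℕ) ∉ J)) :
    (((∀ a : Fin p, iE a < jE a) ∧ (∀ a b : Fin p, (a : ℕ) + 1 = (b : ℕ) → jE a < iE b)) →
        ((LW n).submatrix Rk Ck).det
          = -∏ r ∈ (Finset.Icc 1 n) \ (I ∪ J), xv n (n + r - 1))
    ∧ (¬ ((∀ a : Fin p, iE a < jE a) ∧ (∀ a b : Fin p, (a : ℕ) + 1 = (b : ℕ) → jE a < iE b)) →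
        ((LW n).submatrix Rk Ck).det = 0) := by
  let c : Stmt13.Ctx n p (n - 2 * p) :=
    { I := I, J := J, iE := iE, jE := jE, Rk := Rk, Ck := Ck,
      hn := hn, hp := hp, hm := rfl,
      hIsub := hIsub, hJsub := hJsub, hIJ := hIJ,
      hIcard := hIcard, hJcard := hJcard,
      hIcons := hIcons, hJcons := hJcons,
      hiE := hiE, hiEr := fun x => ((hiEr x).symm.trans (Iff.of_eq rfl)),
      hjE := hjE, hjEr := fun x => ((hjEr x).symm.trans (Iff.of_eq rfl)),
      hij := hij,
      hRk := hRk, hRkr := fun r => ((Iff.of_eq rfl).trans (hRkr r)),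
      hCk := hCk, hCkr := fun r => ((Iff.of_eq rfl).trans (hCkr r)) }
  constructor
  · intro hint
    exact c.det_interleaved ⟨hint.1, hint.2⟩
  · intro hnot
    exact c.det_not_interleaved (fun h => hnot ⟨h.1, h.2⟩)
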